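/- For the potential V with V(r)=−1 for r∈[1,√2] and V(r)=0 for r>√2, the energy per point of ℤ² converges: lim_{R→∞} E[V](ℤ² ∩ B_R)/#(ℤ² ∩ B_R) = −4. -/

import Mathlib

open scoped Classical

/-- The potential V with V(r) = −1 for r ∈ [1,√2] and V(r) = 0 otherwise (in particular
for r > √2). -/
noncomputable def V5 (r : ℝ) : ℝ := if 1 ≤ r ∧ r ≤ Real.sqrt 2 then -1 else 0

/-- The embedding of ℤ² into the Euclidean plane. -/
noncomputable def latticePt (z : ℤ × ℤ) : EuclideanSpace ℝ (Fin 2) :=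
  (WithLp.equiv 2 (Fin 2 → ℝ)).symm ![(z.1 : ℝ), (z.2 : ℝ)]

/-- The finite set ℤ² ∩ B_R (open ball of radius R centered at the origin). -/
noncomputable def ballPts (R : ℝ) : Finset (ℤ × ℤ) :=
  (Finset.Icc (-(⌈R⌉ + 1), -(⌈R⌉ + 1)) (⌈R⌉ + 1, ⌈R⌉ + 1)).filter
    (fun z => Real.sqrt ((z.1 : ℝ) ^ 2 + (z.2 : ℝ) ^ 2) < R)

noncomputable def ptR (z : ℤ × ℤ) : ℝ := Real.sqrt ((z.1:ℝ)^2 + (z.2:ℝ)^2)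

lemma mem_ballPts {R : ℝ} {p : ℤ × ℤ} : p ∈ ballPts R ↔ ptR p < R := by
  rw [ballPts, Finset.mem_filter, ptR]
  constructor
  · exact fun h => h.2
  · intro h
    refine ⟨?_, h⟩
    have h0 : (0:ℝ) ≤ Real.sqrt ((p.1:ℝ)^2 + (p.2:ℝ)^2) := Real.sqrt_nonneg _
    have h1 : |(p.1:ℝ)| < R := by
      calc |(p.1:ℝ)| = Real.sqrt ((p.1:ℝ)^2) := (Real.sqrt_sq_eq_abs _).symm
        _ ≤ Real.sqrt ((p.1:ℝ)^2 + (p.2:ℝ)^2) := Real.sqrt_le_sqrt (by nlinarith [sq_nonneg (p.2:ℝ)])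
        _ < R := h
    have h2 : |(p.2:ℝ)| < R := by
      calc |(p.2:ℝ)| = Real.sqrt ((p.2:ℝ)^2) := (Real.sqrt_sq_eq_abs _).symm
        _ ≤ Real.sqrt ((p.1:ℝ)^2 + (p.2:ℝ)^2) := Real.sqrt_le_sqrt (by nlinarith [sq_nonneg (p.1:ℝ)])
        _ < R := h
    have hR : R ≤ (⌈R⌉:ℝ) + 1 := le_trans (Int.le_ceil R) (by linarith)
    rw [abs_lt] at h1 h2
    have key : ∀ z : ℤ, -R < (z:ℝ) → (z:ℝ) < R → -(⌈R⌉+1) ≤ z ∧ z ≤ ⌈R⌉+1 := by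
      intro z hz1 hz2
      have u1 : (z:ℝ) < ((⌈R⌉+1 : ℤ):ℝ) := by push_cast; linarith
      have u2 : ((-(⌈R⌉+1) : ℤ):ℝ) < (z:ℝ) := by push_cast; linarith
      have v1 : z < ⌈R⌉+1 := by exact_mod_cast u1
      have v2 : -(⌈R⌉+1) < z := by exact_mod_cast u2
      omega
    rw [Finset.mem_Icc, Prod.le_def, Prod.le_def]
    have k1 := key p.1 h1.1 h1.2
    have k2 := key p.2 h2.1 h2.2
    exact ⟨⟨k1.1, k2.1⟩, ⟨k1.2, k2.2⟩⟩

lemma norm_latticePt (z : ℤ × ℤ) : ‖latticePt z‖ = ptR z := by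
  rw [latticePt, ptR, EuclideanSpace.norm_eq]
  simp [Fin.sum_univ_two, sq_abs]

lemma latticePt_sub (p q : ℤ × ℤ) : latticePt (p - q) = latticePt p - latticePt q := by
  unfold latticePt
  apply PiLp.ext
  intro i
  fin_cases i <;> simp

lemma dist_latticePt (p q : ℤ × ℤ) : dist (latticePt p) (latticePt q) = ptR (p - q) := by
  rw [dist_eq_norm, ← latticePt_sub, norm_latticePt]

def D8 : Finset (ℤ × ℤ) := {(1,0),(-1,0),(0,1),(0,-1),(1,1),(1,-1),(-1,1),(-1,-1)}

lemma card_D8 : D8.card = 8 := by decide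

lemma mem_D8_iff {z : ℤ × ℤ} : z ∈ D8 ↔ z.1^2 + z.2^2 = 1 ∨ z.1^2 + z.2^2 = 2 := by
  constructor
  · intro h
    fin_cases h <;> decide
  · rintro (h | h) <;>
    · have h1 : z.1 ≤ 1 := by nlinarith [sq_nonneg z.2, sq_nonneg (z.1-1)]
      have h2 : -1 ≤ z.1 := by nlinarith [sq_nonneg z.2, sq_nonneg (z.1+1)]
      have h3 : z.2 ≤ 1 := by nlinarith [sq_nonneg z.1, sq_nonneg (z.2-1)]
      have h4 : -1 ≤ z.2 := by nlinarith [sq_nonneg z.1, sq_nonneg (z.2+1)]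
      obtain ⟨a, b⟩ := z
      simp only at *
      interval_cases a <;> interval_cases b <;> revert h <;> decide

lemma ptR_le_sqrt_two {d : ℤ × ℤ} (hd : d ∈ D8) : ptR d ≤ Real.sqrt 2 := by
  rw [ptR]
  apply Real.sqrt_le_sqrt
  rw [mem_D8_iff] at hd
  have h2 : d.1^2 + d.2^2 ≤ 2 := by omega
  calc (d.1:ℝ)^2 + (d.2:ℝ)^2 = ((d.1^2+d.2^2 : ℤ):ℝ) := by push_cast; ring
    _ ≤ 2 := by exact_mod_cast h2

lemma V5_dist (p q : ℤ × ℤ) :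
    V5 (dist (latticePt p) (latticePt q)) = if p - q ∈ D8 then (-1:ℝ) else 0 := by
  rw [dist_latticePt, V5]
  congr 1
  rw [eq_iff_iff]
  set z := p - q
  rw [mem_D8_iff, ptR]
  have hnn : (0:ℝ) ≤ (z.1:ℝ)^2 + (z.2:ℝ)^2 := by positivity
  constructor
  · rintro ⟨h1, h2⟩
    have e1 : (1:ℝ) ≤ (z.1:ℝ)^2 + (z.2:ℝ)^2 := by
      nlinarith [Real.sq_sqrt hnn, Real.sqrt_nonneg ((z.1:ℝ)^2 + (z.2:ℝ)^2)]
    have e2 : (z.1:ℝ)^2 + (z.2:ℝ)^2 ≤ 2 := by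
      nlinarith [Real.sq_sqrt hnn, Real.sq_sqrt (by norm_num : (0:ℝ) ≤ 2), Real.sqrt_nonneg (2:ℝ)]
    have c1 : ((1:ℤ):ℝ) ≤ ((z.1^2 + z.2^2 : ℤ):ℝ) := by push_cast; linarith
    have c2 : ((z.1^2 + z.2^2 : ℤ):ℝ) ≤ ((2:ℤ):ℝ) := by push_cast; linarith
    have i1 : (1:ℤ) ≤ z.1^2 + z.2^2 := by exact_mod_cast c1
    have i2 : z.1^2 + z.2^2 ≤ 2 := by exact_mod_cast c2
    omega
  · intro h
    have e : (z.1:ℝ)^2 + (z.2:ℝ)^2 = 1 ∨ (z.1:ℝ)^2 + (z.2:ℝ)^2 = 2 := by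
      rcases h with h | h <;> [left; right] <;>
      · calc (z.1:ℝ)^2 + (z.2:ℝ)^2 = ((z.1^2+z.2^2 : ℤ):ℝ) := by push_cast; ring
          _ = _ := by rw [h]; norm_num
    rcases e with h | h <;> rw [h]
    · rw [Real.sqrt_one]
      exact ⟨le_refl _, Real.one_le_sqrt.mpr (by norm_num)⟩
    · exact ⟨Real.one_le_sqrt.mpr (by norm_num), le_refl _⟩

lemma zero_not_mem_D8 : (0 : ℤ × ℤ) ∉ D8 := by decide

lemma card_nbr_eq (s : Finset (ℤ × ℤ)) (p : ℤ × ℤ) :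
    ((s.erase p).filter (fun q => p - q ∈ D8)).card
      = (D8.filter (fun d => p - d ∈ s)).card := by
  apply Finset.card_bij' (fun q _ => p - q) (fun d _ => p - d)
  · intro q hq
    rw [Finset.mem_filter] at hq ⊢
    exact ⟨hq.2, by rw [sub_sub_cancel]; exact Finset.mem_of_mem_erase hq.1⟩
  · intro d hd
    rw [Finset.mem_filter] at hd ⊢
    refine ⟨Finset.mem_erase.mpr ⟨?_, hd.2⟩, by rw [sub_sub_cancel]; exact hd.1⟩
    intro hcon
    rw [sub_eq_self] at hcon
    exact zero_not_mem_D8 (hcon ▸ hd.1)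
  · intro q _; rw [sub_sub_cancel]
  · intro d _; rw [sub_sub_cancel]

lemma innerSumV5 (R : ℝ) (p : ℤ × ℤ) :
    ∑ q ∈ (ballPts R).erase p, V5 (dist (latticePt p) (latticePt q))
      = -((D8.filter (fun d => p - d ∈ ballPts R)).card : ℝ) := by
  rw [Finset.sum_congr rfl (fun q _ => V5_dist p q), ← Finset.sum_filter,
    Finset.sum_const, ← card_nbr_eq (ballPts R) p]
  simp

lemma energy_eq (R : ℝ) :
    ∑ p ∈ ballPts R, ∑ q ∈ (ballPts R).erase p, V5 (dist (latticePt p) (latticePt q))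
      = -(∑ p ∈ ballPts R, ((D8.filter (fun d => p - d ∈ ballPts R)).card : ℝ)) := by
  rw [← Finset.sum_neg_distrib]
  exact Finset.sum_congr rfl fun p _ => by rw [innerSumV5]

lemma sqrt_two_lt_two : Real.sqrt 2 < 2 := by
  nlinarith [Real.sq_sqrt (by norm_num : (0:ℝ) ≤ 2), Real.sqrt_nonneg (2:ℝ)]

lemma ballPts_mono {R₁ R₂ : ℝ} (h : R₁ ≤ R₂) : ballPts R₁ ⊆ ballPts R₂ := by
  intro p hp
  rw [mem_ballPts] at hp ⊢
  linarith

lemma filter_eq_D8 {R : ℝ} {p : ℤ × ℤ} (hp : p ∈ ballPts (R - 2)) :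
    (D8.filter (fun d => p - d ∈ ballPts R)) = D8 := by
  apply Finset.filter_true_of_mem
  intro d hd
  rw [mem_ballPts] at hp ⊢
  have h1 : ptR (p - d) ≤ ptR p + ptR d := by
    rw [← norm_latticePt, ← norm_latticePt, ← norm_latticePt, latticePt_sub]
    exact norm_sub_le _ _
  have h2 := ptR_le_sqrt_two hd
  have h3 := sqrt_two_lt_two
  linarith

lemma sum_ge (R : ℝ) :
    8 * (((ballPts (R-2)).card : ℝ)) ≤
      ∑ p ∈ ballPts R, ((D8.filter (fun d => p - d ∈ ballPts R)).card : ℝ) := by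
  calc 8 * (((ballPts (R-2)).card : ℝ))
      = ∑ p ∈ ballPts (R-2), ((D8.filter (fun d => p - d ∈ ballPts R)).card : ℝ) := by
        rw [Finset.sum_congr rfl (fun p hp => by rw [filter_eq_D8 hp, card_D8])]
        rw [Finset.sum_const]; push_cast; ring
    _ ≤ _ := by
        apply Finset.sum_le_sum_of_subset_of_nonneg (ballPts_mono (by linarith))
        intro p _ _; positivity

lemma sum_le (R : ℝ) :
    ∑ p ∈ ballPts R, ((D8.filter (fun d => p - d ∈ ballPts R)).card : ℝ)
      ≤ 8 * ((ballPts R).card : ℝ) := by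
  calc ∑ p ∈ ballPts R, ((D8.filter (fun d => p - d ∈ ballPts R)).card : ℝ)
      ≤ ∑ p ∈ ballPts R, (8:ℝ) := by
        apply Finset.sum_le_sum
        intro p _
        have := Finset.card_filter_le D8 (fun d => p - d ∈ ballPts R)
        rw [card_D8] at this
        exact_mod_cast this
    _ = 8 * ((ballPts R).card : ℝ) := by rw [Finset.sum_const]; push_cast; ring

lemma card_lower {R : ℝ} (hR : 2 ≤ R) : (R - 1)^2 ≤ ((ballPts R).card : ℝ) := by
  have hR0 : (0:ℝ) < R := by linarith
  obtain ⟨m, hm⟩ : ∃ m : ℤ, m = ⌈R/2⌉ - 1 := ⟨_, rfl⟩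
  have hm0 : 0 ≤ m := by
    have : (1:ℤ) ≤ ⌈R/2⌉ := by
      rw [Int.le_ceil_iff]
      norm_num; linarith
    omega
  have hmR : (m:ℝ) ≤ R/2 := by
    have := Int.ceil_lt_add_one (R/2)
    push_cast [hm]
    linarith
  have hsub : Finset.Icc ((-m,-m) : ℤ × ℤ) (m,m) ⊆ ballPts R := by
    intro p hp
    rw [Finset.mem_Icc, Prod.le_def, Prod.le_def] at hp
    rw [mem_ballPts, ptR, Real.sqrt_lt' hR0]
    have e1 : (p.1:ℝ)^2 ≤ (m:ℝ)^2 := by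
      have a1 : ((-m:ℤ):ℝ) ≤ (p.1:ℝ) := by exact_mod_cast hp.1.1
      have a2 : ((p.1:ℤ):ℝ) ≤ ((m:ℤ):ℝ) := by exact_mod_cast hp.2.1
      push_cast at a1
      nlinarith
    have e2 : (p.2:ℝ)^2 ≤ (m:ℝ)^2 := by
      have a1 : ((-m:ℤ):ℝ) ≤ (p.2:ℝ) := by exact_mod_cast hp.1.2
      have a2 : ((p.2:ℤ):ℝ) ≤ ((m:ℤ):ℝ) := by exact_mod_cast hp.2.2
      push_cast at a1
      nlinarith
    nlinarith [mul_le_mul hmR hmR (by positivity) (by linarith), sq_nonneg R]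
  have hcard : ((Finset.Icc ((-m,-m) : ℤ × ℤ) (m,m)).card : ℝ) = ((2*m+1 : ℤ) : ℝ)^2 := by
    rw [Finset.Icc_prod_def, Finset.card_product]
    simp only [Int.card_Icc]
    have : (m + 1 - -m) = 2*m+1 := by ring
    rw [this]
    have h1 : ((2*m+1).toNat : ℤ) = 2*m+1 := Int.toNat_of_nonneg (by omega)
    have h2 : (((2*m+1).toNat : ℕ) : ℝ) = 2*(m:ℝ)+1 := by exact_mod_cast h1
    push_cast
    rw [h2]
    ring
  have := Finset.card_le_card hsub
  have hc : ((Finset.Icc ((-m,-m) : ℤ × ℤ) (m,m)).card : ℝ) ≤ ((ballPts R).card : ℝ) := by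
    exact_mod_cast this
  rw [hcard] at hc
  have h2m : R - 1 ≤ ((2*m+1 : ℤ) : ℝ) := by
    have := Int.le_ceil (R/2)
    push_cast [hm]
    linarith
  nlinarith

lemma cardIcc_le (c d : ℤ) (u v : ℝ) (hc : u ≤ (c:ℝ)) (hd : (d:ℝ) ≤ v) (huv : u ≤ v) :
    ((Finset.Icc c d).card : ℝ) ≤ v - u + 1 := by
  rcases le_or_gt c d with h | h
  · rw [Int.card_Icc]
    have h1 : ((d+1-c).toNat : ℤ) = d+1-c := Int.toNat_of_nonneg (by omega)
    have h2 : (((d+1-c).toNat : ℕ) : ℝ) = (d:ℝ)+1-(c:ℝ) := by exact_mod_cast h1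
    rw [h2]; linarith
  · rw [Finset.Icc_eq_empty (by exact_mod_cast not_le.mpr h)]
    simp; linarith

lemma fiber_bound {R : ℝ} (hR : 2 ≤ R) (x : ℤ) :
    ((((ballPts R \ ballPts (R-2)).filter (fun p => p.1 = x)).card : ℝ))
      ≤ 4 * Real.sqrt R + 4 := by
  have hR0 : (0:ℝ) < R := by linarith
  set b : ℝ := Real.sqrt (max 0 (R^2 - (x:ℝ)^2)) with hbdef
  set a : ℝ := Real.sqrt (max 0 ((R-2)^2 - (x:ℝ)^2)) with hadef
  have ha0 : 0 ≤ a := Real.sqrt_nonneg _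
  have hb0 : 0 ≤ b := Real.sqrt_nonneg _
  have hab : a ≤ b := by
    apply Real.sqrt_le_sqrt
    apply max_le (le_max_left _ _)
    have : (R-2)^2 - (x:ℝ)^2 ≤ R^2 - (x:ℝ)^2 := by nlinarith
    exact le_trans this (le_max_right _ _)
  have hsR : (0:ℝ) ≤ Real.sqrt R := Real.sqrt_nonneg _
  have hba : b ≤ a + 2 * Real.sqrt R := by
    have h4 : max 0 (R^2 - (x:ℝ)^2) ≤ max 0 ((R-2)^2 - (x:ℝ)^2) + 4*R := by
      apply max_le
      · have := le_max_left (0:ℝ) ((R-2)^2 - (x:ℝ)^2); linarith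
      · have := le_max_right (0:ℝ) ((R-2)^2 - (x:ℝ)^2); nlinarith
    have ha2 : a^2 = max 0 ((R-2)^2 - (x:ℝ)^2) := Real.sq_sqrt (le_max_left _ _)
    calc b ≤ Real.sqrt ((a + 2*Real.sqrt R)^2) := by
          apply Real.sqrt_le_sqrt
          nlinarith [Real.sq_sqrt (le_of_lt hR0)]
      _ = a + 2*Real.sqrt R := Real.sqrt_sq (by positivity)
  -- the fiber maps injectively via Prod.snd into two Icc's
  have hsub : ∀ p ∈ (ballPts R \ ballPts (R-2)).filter (fun p => p.1 = x),
      p.2 ∈ Finset.Icc ⌈a⌉ ⌊b⌋ ∪ Finset.Icc (-⌊b⌋) (-⌈a⌉) := by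
    intro p hp
    rw [Finset.mem_filter, Finset.mem_sdiff, mem_ballPts, mem_ballPts] at hp
    obtain ⟨⟨h1, h2⟩, hx⟩ := hp
    rw [not_lt] at h2
    rw [ptR] at h1 h2
    have hy2b : ((p.2:ℝ))^2 ≤ max 0 (R^2 - (x:ℝ)^2) := by
      have := (Real.sqrt_lt' hR0).mp h1
      rw [hx] at *
      have : ((p.2:ℝ))^2 ≤ R^2 - (x:ℝ)^2 := by nlinarith
      exact le_trans this (le_max_right _ _)
    have hy2a : max 0 ((R-2)^2 - (x:ℝ)^2) ≤ ((p.2:ℝ))^2 := by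
      apply max_le (sq_nonneg _)
      have h5 : (R-2)^2 ≤ (p.1:ℝ)^2 + (p.2:ℝ)^2 := by
        have := (Real.le_sqrt (by linarith) (by positivity)).mp h2
        linarith
      rw [hx] at h5
      linarith
    have habs1 : |(p.2:ℝ)| ≤ b := by
      rw [← Real.sqrt_sq_eq_abs]
      exact Real.sqrt_le_sqrt hy2b
    have habs2 : a ≤ |(p.2:ℝ)| := by
      rw [← Real.sqrt_sq_eq_abs]
      exact Real.sqrt_le_sqrt hy2a
    rcases le_or_gt 0 p.2 with hy | hy
    · apply Finset.mem_union_left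
      rw [Finset.mem_Icc]
      have hyabs : |(p.2:ℝ)| = (p.2:ℝ) := abs_of_nonneg (by exact_mod_cast hy)
      rw [hyabs] at habs1 habs2
      exact ⟨Int.ceil_le.mpr habs2, Int.le_floor.mpr habs1⟩
    · apply Finset.mem_union_right
      rw [Finset.mem_Icc]
      have hyabs : |(p.2:ℝ)| = -(p.2:ℝ) := abs_of_neg (by exact_mod_cast hy)
      rw [hyabs] at habs1 habs2
      constructor
      · rw [neg_le]
        apply Int.le_floor.mpr
        push_cast
        linarith
      · rw [le_neg]
        apply Int.ceil_le.mpr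
        push_cast
        linarith
  have hinj : ((ballPts R \ ballPts (R-2)).filter (fun p => p.1 = x)).card
      ≤ (Finset.Icc ⌈a⌉ ⌊b⌋ ∪ Finset.Icc (-⌊b⌋) (-⌈a⌉)).card := by
    apply Finset.card_le_card_of_injOn Prod.snd hsub
    intro p hp q hq hpq
    rw [Finset.mem_coe, Finset.mem_filter] at hp hq
    exact Prod.ext (hp.2.trans hq.2.symm) hpq
  have hcard : ((Finset.Icc ⌈a⌉ ⌊b⌋ ∪ Finset.Icc (-⌊b⌋) (-⌈a⌉)).card : ℝ)
      ≤ 2*(b - a) + 2 := by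
    have := Finset.card_union_le (Finset.Icc ⌈a⌉ ⌊b⌋) (Finset.Icc (-⌊b⌋) (-⌈a⌉))
    have c1 : ((Finset.Icc ⌈a⌉ ⌊b⌋).card : ℝ) ≤ b - a + 1 :=
      cardIcc_le _ _ a b (Int.le_ceil a) (Int.floor_le b) hab
    have c2 : ((Finset.Icc (-⌊b⌋) (-⌈a⌉)).card : ℝ) ≤ (-a) - (-b) + 1 := by
      apply cardIcc_le _ _ (-b) (-a) _ _ (by linarith)
      · push_cast; linarith [Int.floor_le b]
      · push_cast; linarith [Int.le_ceil a]
    have hcast : ((Finset.Icc ⌈a⌉ ⌊b⌋ ∪ Finset.Icc (-⌊b⌋) (-⌈a⌉)).card : ℝ)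
        ≤ ((Finset.Icc ⌈a⌉ ⌊b⌋).card : ℝ) + ((Finset.Icc (-⌊b⌋) (-⌈a⌉)).card : ℝ) := by
      exact_mod_cast this
    linarith
  have : (((ballPts R \ ballPts (R-2)).filter (fun p => p.1 = x)).card : ℝ)
      ≤ ((Finset.Icc ⌈a⌉ ⌊b⌋ ∪ Finset.Icc (-⌊b⌋) (-⌈a⌉)).card : ℝ) := by exact_mod_cast hinj
  linarith

lemma annulus_bound {R : ℝ} (hR : 2 ≤ R) :
    (((ballPts R \ ballPts (R-2)).card : ℝ)) ≤ (2*(⌈R⌉:ℝ)+3) * (4*Real.sqrt R + 4) := by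
  have hfst : ∀ p ∈ ballPts R \ ballPts (R-2), p.1 ∈ Finset.Icc (-(⌈R⌉+1)) (⌈R⌉+1) := by
    intro p hp
    have h1 := (Finset.mem_sdiff.mp hp).1
    rw [ballPts, Finset.mem_filter, Finset.mem_Icc, Prod.le_def, Prod.le_def] at h1
    rw [Finset.mem_Icc]
    exact ⟨h1.1.1.1, h1.1.2.1⟩
  rw [Finset.card_eq_sum_card_fiberwise hfst]
  have hbound : ∀ x ∈ Finset.Icc (-(⌈R⌉+1)) (⌈R⌉+1),
      (((ballPts R \ ballPts (R-2)).filter (fun p => p.1 = x)).card : ℝ)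
        ≤ 4*Real.sqrt R + 4 := fun x _ => fiber_bound hR x
  calc ((∑ x ∈ Finset.Icc (-(⌈R⌉+1)) (⌈R⌉+1),
        ((ballPts R \ ballPts (R-2)).filter (fun p => p.1 = x)).card : ℕ) : ℝ)
      = ∑ x ∈ Finset.Icc (-(⌈R⌉+1)) (⌈R⌉+1),
        (((ballPts R \ ballPts (R-2)).filter (fun p => p.1 = x)).card : ℝ) := by push_cast; rfl
    _ ≤ ∑ _x ∈ Finset.Icc (-(⌈R⌉+1)) (⌈R⌉+1), (4*Real.sqrt R + 4) :=
        Finset.sum_le_sum hbound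
    _ = ((Finset.Icc (-(⌈R⌉+1)) (⌈R⌉+1)).card : ℝ) * (4*Real.sqrt R + 4) := by
        rw [Finset.sum_const, nsmul_eq_mul]
    _ ≤ (2*(⌈R⌉:ℝ)+3) * (4*Real.sqrt R + 4) := by
        have hc : ((Finset.Icc (-(⌈R⌉+1)) (⌈R⌉+1)).card : ℝ) ≤ 2*(⌈R⌉:ℝ)+3 := by
          have := cardIcc_le (-(⌈R⌉+1)) (⌈R⌉+1) (-((⌈R⌉:ℝ)+1)) ((⌈R⌉:ℝ)+1)
            (by push_cast; linarith) (by push_cast; linarith)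
            (by have : (0:ℝ) ≤ (⌈R⌉:ℝ) := le_trans (by linarith) (Int.le_ceil R); linarith)
          linarith
        have hpos : (0:ℝ) ≤ 4*Real.sqrt R + 4 := by positivity
        nlinarith

lemma tendsto_sqrt_atTop : Filter.Tendsto Real.sqrt Filter.atTop Filter.atTop := by
  apply Filter.tendsto_atTop_atTop.mpr
  intro c
  refine ⟨c^2, fun x hx => ?_⟩
  calc c ≤ |c| := le_abs_self c
    _ = Real.sqrt (c^2) := (Real.sqrt_sq_eq_abs c).symm
    _ ≤ Real.sqrt x := Real.sqrt_le_sqrt hx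

lemma main_bound {R : ℝ} (hR : 25 ≤ R) :
    -4 ≤ ((1 / 2 : ℝ) *
        ∑ p ∈ ballPts R, ∑ q ∈ (ballPts R).erase p, V5 (dist (latticePt p) (latticePt q))) /
      ((ballPts R).card : ℝ) ∧
    ((1 / 2 : ℝ) *
        ∑ p ∈ ballPts R, ∑ q ∈ (ballPts R).erase p, V5 (dist (latticePt p) (latticePt q))) /
      ((ballPts R).card : ℝ) ≤ -4 + 384 / Real.sqrt R := by
  have hR2 : (2:ℝ) ≤ R := by linarith
  have hB := card_lower hR2
  have hBpos : (0:ℝ) < ((ballPts R).card : ℝ) := by nlinarith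
  set S : ℝ := ∑ p ∈ ballPts R, ((D8.filter (fun d => p - d ∈ ballPts R)).card : ℝ) with hS
  have hnum : ∑ p ∈ ballPts R, ∑ q ∈ (ballPts R).erase p, V5 (dist (latticePt p) (latticePt q))
      = -S := energy_eq R
  have hSle := sum_le R
  have hSge := sum_ge R
  have hsub : ballPts (R-2) ⊆ ballPts R := ballPts_mono (by linarith)
  have hann : ((ballPts R).card : ℝ) - ((ballPts (R-2)).card : ℝ)
      ≤ (2*(⌈R⌉:ℝ)+3) * (4*Real.sqrt R + 4) := by
    have h1 := annulus_bound hR2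
    have h2 : ((ballPts R \ ballPts (R-2)).card : ℝ)
        = ((ballPts R).card : ℝ) - ((ballPts (R-2)).card : ℝ) := by
      rw [Finset.card_sdiff_of_subset hsub]
      have := Finset.card_le_card hsub
      push_cast [Nat.cast_sub this]
      ring
    linarith
  constructor
  · rw [hnum, le_div_iff₀ hBpos]
    nlinarith
  · rw [hnum, div_le_iff₀ hBpos]
    have hsqR : Real.sqrt R * Real.sqrt R = R := Real.mul_self_sqrt (by linarith)
    have ht5 : (5:ℝ) ≤ Real.sqrt R := by
      rw [show (5:ℝ) = Real.sqrt 25 by rw [show (25:ℝ) = 5^2 by norm_num, Real.sqrt_sq]; norm_num]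
      exact Real.sqrt_le_sqrt hR
    have hceil : (⌈R⌉:ℝ) ≤ R + 1 := by linarith [Int.ceil_lt_add_one R]
    have hIB : ((ballPts (R-2)).card : ℝ) ≤ ((ballPts R).card : ℝ) := by
      exact_mod_cast Finset.card_le_card hsub
    -- key: 4 * (B - I) ≤ (384 / sqrt R) * B
    have hkey : 4 * (((ballPts R).card : ℝ) - ((ballPts (R-2)).card : ℝ))
        ≤ (384 / Real.sqrt R) * ((ballPts R).card : ℝ) := by
      have hq : (2*(⌈R⌉:ℝ)+3) * (4*Real.sqrt R + 4) ≤ (2*R+5) * (4*Real.sqrt R + 4) := by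
        have : (0:ℝ) ≤ 4*Real.sqrt R + 4 := by positivity
        nlinarith
      have hmain : 4 * ((2*R+5) * (4*Real.sqrt R + 4)) * Real.sqrt R ≤ 384 * (R-1)^2 := by
        nlinarith [hsqR, ht5, sq_nonneg (Real.sqrt R - 5)]
      rw [div_mul_eq_mul_div, le_div_iff₀ (by linarith : (0:ℝ) < Real.sqrt R)]
      calc 4 * (((ballPts R).card : ℝ) - ((ballPts (R-2)).card : ℝ)) * Real.sqrt R
          ≤ 4 * ((2*R+5) * (4*Real.sqrt R + 4)) * Real.sqrt R := by nlinarith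
        _ ≤ 384 * (R-1)^2 := hmain
        _ ≤ 384 * ((ballPts R).card : ℝ) := by nlinarith
    nlinarith


/-- The energy per point of ℤ² ∩ B_R converges to −4 as R → ∞. -/
theorem lattice_energy_per_point_tendsto :
    Filter.Tendsto
      (fun R : ℝ =>
        ((1 / 2 : ℝ) *
            ∑ p ∈ ballPts R, ∑ q ∈ (ballPts R).erase p, V5 (dist (latticePt p) (latticePt q))) /
          ((ballPts R).card : ℝ))
      Filter.atTop (nhds (-4)) := by
  have hupper : Filter.Tendsto (fun R : ℝ => -4 + 384 / Real.sqrt R) Filter.atTop (nhds (-4)) := by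
    have h1 : Filter.Tendsto (fun R : ℝ => 384 / Real.sqrt R) Filter.atTop (nhds 0) :=
      Filter.Tendsto.div_atTop tendsto_const_nhds tendsto_sqrt_atTop
    have := (tendsto_const_nhds (x := (-4:ℝ)) (f := Filter.atTop (α := ℝ))).add h1
    simpa using this
  apply tendsto_of_tendsto_of_tendsto_of_le_of_le' (tendsto_const_nhds) hupper
  · exact Filter.eventually_atTop.mpr ⟨25, fun R hR => (main_bound hR).1⟩
  · exact Filter.eventually_atTop.mpr ⟨25, fun R hR => (main_bound hR).2⟩
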